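/- Let g be a nilpotent Lie algebra whose commutator subalgebra [g,g] has real dimension 2, and let J be an integrable complex structure on g. Then at least one of the subspaces Z(g) (the centre) and [g,g] is J-invariant. -/

import Mathlib

/-- If the commutator subalgebra of a nilpotent Lie algebra `g` is 2-dimensional, then for
any integrable complex structure `J` at least one of the centre and the commutator
subalgebra is `J`-invariant. -/
theorem stmt_11 (g : Type*) [LieRing g] [LieAlgebra ℝ g] [LieRing.IsNilpotent g]
    [Module.Finite ℝ g]
    (hdim : Module.finrank ℝ (LieAlgebra.derivedSeries ℝ g 1 : Submodule ℝ g) = 2)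
    (J : g →ₗ[ℝ] g) (hJ : J ∘ₗ J = -LinearMap.id)
    (hint : ∀ x y : g, ⁅x, y⁆ - ⁅J x, J y⁆ + J ⁅J x, y⁆ + J ⁅x, J y⁆ = 0) :
    (∀ z ∈ LieAlgebra.center ℝ g, J z ∈ LieAlgebra.center ℝ g) ∨
      (∀ c ∈ LieAlgebra.derivedSeries ℝ g 1, J c ∈ LieAlgebra.derivedSeries ℝ g 1) := by
  have hJJ : ∀ v : g, J (J v) = -v := by
    intro v
    have := congrArg (fun f : g →ₗ[ℝ] g => f v) hJ
    simpa using this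
  -- key consequence of integrability with z central
  have key : ∀ z ∈ LieAlgebra.center ℝ g, ∀ x : g, J ⁅x, J z⁆ = ⁅J x, J z⁆ := by
    intro z hz x
    have hz' : ∀ w : g, ⁅w, z⁆ = 0 := (LieModule.mem_maxTrivSubmodule ℝ g g z).mp hz
    have h := hint x z
    rw [hz' x, hz' (J x)] at h
    simp only [map_zero, zero_add, add_zero, zero_sub, sub_eq_zero] at h
    exact (neg_add_eq_zero.mp h).symm
  -- The subspace V spanned by brackets ⁅x, J z⁆ with z central
  set S : Set g := {v | ∃ z ∈ LieAlgebra.center ℝ g, ∃ x : g, v = ⁅x, J z⁆} with hS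
  set V : Submodule ℝ g := Submodule.span ℝ S with hV
  set D : Submodule ℝ g := (LieAlgebra.derivedSeries ℝ g 1 : Submodule ℝ g) with hD
  have hSsub : S ⊆ (D : Set g) := by
    rintro v ⟨z, hz, x, rfl⟩
    show ⁅x, J z⁆ ∈ LieAlgebra.derivedSeries ℝ g 1
    rw [LieAlgebra.derivedSeries_def, LieAlgebra.derivedSeriesOfIdeal_succ]
    exact LieSubmodule.lie_mem_lie (LieSubmodule.mem_top x) (LieSubmodule.mem_top (J z))
  have hVD : V ≤ D := Submodule.span_le.mpr hSsub
  have hJS : ∀ v ∈ S, J v ∈ S := by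
    rintro v ⟨z, hz, x, rfl⟩
    exact ⟨z, hz, J x, key z hz x⟩
  have hJV : ∀ v ∈ V, J v ∈ V := by
    intro v hv
    have : Submodule.map J V ≤ V := by
      rw [hV, Submodule.map_span, Submodule.span_le]
      rintro w ⟨u, hu, rfl⟩
      exact Submodule.subset_span (hJS u hu)
    exact this ⟨v, hv, rfl⟩
  have hVfin : Module.finrank ℝ V ≤ 2 := hdim ▸ Submodule.finrank_mono hVD
  interval_cases h : Module.finrank ℝ V
  · -- V = ⊥, so the centre is J-invariant
    left
    have hVbot : V = ⊥ := Submodule.finrank_eq_zero.mp h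
    intro z hz
    rw [LieModule.mem_maxTrivSubmodule]
    intro x
    have : ⁅x, J z⁆ ∈ V := Submodule.subset_span ⟨z, hz, x, rfl⟩
    rw [hVbot] at this
    simpa using this
  · -- dim V = 1 is impossible since V carries a complex structure
    exfalso
    obtain ⟨v, hv0, hvspan⟩ := finrank_eq_one_iff'.mp h
    obtain ⟨c, hc⟩ := hvspan ⟨J v.1, hJV v.1 v.2⟩
    have hcg : J v.1 = c • v.1 := congrArg Subtype.val hc.symm
    have : -v.1 = (c * c) • v.1 := by
      rw [← hJJ v.1, hcg, map_smul, hcg, smul_smul]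
    have h2 : (c * c + 1) • v.1 = 0 := by
      rw [add_smul, one_smul]
      rw [← this]
      abel
    rcases smul_eq_zero.mp h2 with h3 | h3
    · nlinarith [sq_nonneg c]
    · exact hv0 (Subtype.coe_injective h3)
  · -- V = D, so the derived subalgebra is J-invariant
    right
    have hVDeq : V = D := Submodule.eq_of_le_of_finrank_le hVD (by rw [h, hdim])
    intro c hc
    have : J c ∈ V := hJV c (hVDeq ▸ hc)
    rw [hVDeq] at this
    exact this
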